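/- If A is a dense subring of B, then the map from Spec B to Spec A sending a prime ideal P of B to P ∩ A is injective. -/
import Mathlib


def IsDenseSubring {B : Type*} [CommRing B] (A : Subring B) : Prop :=
  ∀ I : Ideal B, ∀ b ∉ I.radical, ∃ a ∉ I.radical, a * b ∈ A

theorem aux_le {B : Type*} [CommRing B] (A : Subring B) (hA : IsDenseSubring A)
    (P Q : PrimeSpectrum B)
    (h : ∀ x : A, (x : B) ∈ P.asIdeal ↔ (x : B) ∈ Q.asIdeal) :
    P.asIdeal ≤ Q.asIdeal := by
  intro b hb
  by_contra hbQ
  have hrad : Q.asIdeal.radical = Q.asIdeal := Q.isPrime.radical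
  obtain ⟨a, haQ, hab⟩ := hA Q.asIdeal b (by rwa [hrad])
  rw [hrad] at haQ
  have habP : a * b ∈ P.asIdeal := P.asIdeal.mul_mem_left a hb
  have habQ : a * b ∈ Q.asIdeal := (h ⟨a * b, hab⟩).mp habP
  rcases Q.isPrime.mem_or_mem habQ with h1 | h2
  · exact haQ h1
  · exact hbQ h2

theorem stmt_5 {B : Type*} [CommRing B] (A : Subring B) (hA : IsDenseSubring A) :
    Function.Injective (fun P : PrimeSpectrum B => PrimeSpectrum.comap A.subtype P) := by
  intro P Q h
  have h' : ∀ x : A, (x : B) ∈ P.asIdeal ↔ (x : B) ∈ Q.asIdeal := by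
    intro x
    have := congrArg PrimeSpectrum.asIdeal h
    simp only [PrimeSpectrum.comap_asIdeal] at this
    constructor
    · intro hx
      have : x ∈ Q.asIdeal.comap A.subtype := this ▸ (show x ∈ P.asIdeal.comap A.subtype from hx)
      exact this
    · intro hx
      have : x ∈ P.asIdeal.comap A.subtype := this ▸ (show x ∈ Q.asIdeal.comap A.subtype from hx)
      exact this
  ext1
  exact le_antisymm (aux_le A hA P Q h') (aux_le A hA Q P (fun x => (h' x).symm))
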